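/- Suppose X ⊆ [ω]^ω has the property that for every G_δ set G ⊆ P(ω) containing Fin there is a σ-compact F ⊆ G with |X ∖ F| < 𝔟. Then X ∪ Fin is 𝔟-concentrated on Fin and for every A ⊆ X with |A| < 𝔟, the set (X ∖ A) ∪ Fin is Hurewicz. -/

import Mathlib

open Set Filter Cardinal

/-- The finite subsets of ω, as a subset of Cantor space `ℕ → Bool`. -/
def FinS : Set (ℕ → Bool) := {x | {n | x n = true}.Finite}

/-- The bounding number 𝔟: the least size of a `≤*`-unbounded family in `ω^ω`. -/
noncomputable def bNumber : Cardinal :=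
  sInf {c | ∃ F : Set (ℕ → ℕ), c = Cardinal.mk F ∧
    ∀ g : ℕ → ℕ, ∃ f ∈ F, ¬ ∀ᶠ n in Filter.atTop, f n ≤ g n}

/-- Any family of size `< 𝔟` is eventually dominated by a single function. -/
lemma bounded_of_mk_lt {ι : Type} (f : ι → ℕ → ℕ) (h : Cardinal.mk ι < bNumber) :
    ∃ g : ℕ → ℕ, ∀ i, ∀ᶠ n in Filter.atTop, f i n ≤ g n := by
  by_contra hc
  push_neg at hc
  have hmem : Cardinal.mk ↥(Set.range f) ∈ {c | ∃ F : Set (ℕ → ℕ), c = Cardinal.mk F ∧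
      ∀ g : ℕ → ℕ, ∃ f ∈ F, ¬ ∀ᶠ n in Filter.atTop, f n ≤ g n} := by
    refine ⟨Set.range f, rfl, fun g => ?_⟩
    obtain ⟨i, hi⟩ := hc g
    exact ⟨f i, ⟨i, rfl⟩, Filter.not_eventually.2 (hi.mono fun n hn => not_le.2 hn)⟩
  have hlt : Cardinal.mk ↥(Set.range f) < bNumber := Cardinal.mk_range_le.trans_lt h
  exact absurd (show bNumber ≤ _ from csInf_le' hmem) (not_le.2 hlt)

lemma aleph0_lt_bNumber : ℵ₀ < bNumber := by
  have hne : {c | ∃ F : Set (ℕ → ℕ), c = Cardinal.mk F ∧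
      ∀ g : ℕ → ℕ, ∃ f ∈ F, ¬ ∀ᶠ n in Filter.atTop, f n ≤ g n}.Nonempty := by
    refine ⟨_, Set.univ, rfl, fun g => ⟨fun n => g n + 1, trivial, ?_⟩⟩
    simp only [Filter.eventually_atTop, not_exists, not_forall]
    intro m
    exact ⟨m, le_refl m, by omega⟩
  obtain ⟨F, hF, hunb⟩ := csInf_mem hne
  by_contra hle
  push_neg at hle
  have hcnt : F.Countable := by
    rw [← Cardinal.le_aleph0_iff_set_countable, ← hF]
    exact hle
  rcases F.eq_empty_or_nonempty with rfl | hFne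
  · obtain ⟨f, hf, -⟩ := hunb 0; exact hf
  · obtain ⟨e, he⟩ := hcnt.exists_eq_range hFne
    set g : ℕ → ℕ := fun n => Finset.sup (Finset.range (n + 1)) (fun k => e k n) with hg
    obtain ⟨f, hf, hnf⟩ := hunb g
    rw [he] at hf
    obtain ⟨k, rfl⟩ := hf
    apply hnf
    rw [Filter.eventually_atTop]
    refine ⟨k, fun n hn => ?_⟩
    exact Finset.le_sup (f := fun j => e j n) (Finset.mem_range.2 (by omega))

lemma finS_countable : FinS.Countable := by
  rw [← Set.countable_coe_iff]
  have hinj : Function.Injective (fun p : FinS => Set.Finite.toFinset p.2) := by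
    rintro ⟨x, hx⟩ ⟨y, hy⟩ h
    simp only [Subtype.mk.injEq]
    have hset : ∀ n, x n = true ↔ y n = true := by
      intro n
      show n ∈ {m | x m = true} ↔ n ∈ {m | y m = true}
      rw [← Set.Finite.mem_toFinset hx, ← Set.Finite.mem_toFinset hy]
      simp only at h
      rw [h]
    funext n
    have := hset n
    cases hxn : x n <;> cases hyn : y n <;> simp_all
  exact Function.Injective.countable hinj

/-- Selection for sets of size `< 𝔟`. -/
lemma small_select (Y : Set (ℕ → Bool)) (hY : Cardinal.mk Y < bNumber)
    (𝒰 : ℕ → Set (Set (ℕ → Bool)))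
    (h𝒰 : ∀ n, (∀ V ∈ 𝒰 n, IsOpen V) ∧ Y ⊆ ⋃₀ 𝒰 n) :
    ∃ ℱ : ℕ → Set (Set (ℕ → Bool)), (∀ n, (ℱ n).Finite ∧ ℱ n ⊆ 𝒰 n) ∧
      ∀ x ∈ Y, ∀ᶠ n in Filter.atTop, x ∈ ⋃₀ ℱ n := by
  classical
  rcases Y.eq_empty_or_nonempty with rfl | ⟨y0, hy0⟩
  · exact ⟨fun _ => ∅, fun n => ⟨Set.finite_empty, Set.empty_subset _⟩, by simp⟩
  · have hT : ∀ n, ∃ T : Set (Set (ℕ → Bool)), T.Countable ∧ T ⊆ 𝒰 n ∧ ⋃₀ T = ⋃₀ 𝒰 n :=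
      fun n => TopologicalSpace.isOpen_sUnion_countable (𝒰 n) (h𝒰 n).1
    choose T hTc hTsub hTU using hT
    have hYT : ∀ n, Y ⊆ ⋃₀ T n := fun n => (hTU n) ▸ (h𝒰 n).2
    have hTne : ∀ n, (T n).Nonempty := by
      intro n
      obtain ⟨V, hV, -⟩ := hYT n hy0
      exact ⟨V, hV⟩
    have he : ∀ n, ∃ e : ℕ → Set (ℕ → Bool), T n = Set.range e :=
      fun n => (hTc n).exists_eq_range (hTne n)
    choose e he using he
    have hex : ∀ (y : Y) (n : ℕ), ∃ k, (y : ℕ → Bool) ∈ e n k := by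
      intro y n
      obtain ⟨V, hV, hyV⟩ := hYT n y.2
      rw [he n] at hV
      obtain ⟨k, rfl⟩ := hV
      exact ⟨k, hyV⟩
    set f : Y → ℕ → ℕ := fun y n => Nat.find (hex y n) with hf
    obtain ⟨g, hg⟩ := bounded_of_mk_lt f hY
    refine ⟨fun n => e n '' Set.Iic (g n), fun n => ⟨(Set.finite_Iic _).image _,
      fun V hV => ?_⟩, fun y hy => ?_⟩
    · obtain ⟨k, -, rfl⟩ := hV
      exact hTsub n (he n ▸ ⟨k, rfl⟩)
    · refine (hg ⟨y, hy⟩).mono fun n hn => ?_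
      exact ⟨e n (f ⟨y, hy⟩ n), ⟨_, hn, rfl⟩, Nat.find_spec (hex ⟨y, hy⟩ n)⟩

/-- Selection for σ-compact sets covered by every `⋃₀ 𝒰 n`. -/
lemma sigma_select (C : ℕ → Set (ℕ → Bool)) (hC : ∀ n, IsCompact (C n))
    (𝒰 : ℕ → Set (Set (ℕ → Bool)))
    (hop : ∀ n, ∀ V ∈ 𝒰 n, IsOpen V) (hcov : ∀ n, (⋃ m, C m) ⊆ ⋃₀ 𝒰 n) :
    ∃ ℱ : ℕ → Set (Set (ℕ → Bool)), (∀ n, (ℱ n).Finite ∧ ℱ n ⊆ 𝒰 n) ∧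
      ∀ x ∈ ⋃ m, C m, ∀ᶠ n in Filter.atTop, x ∈ ⋃₀ ℱ n := by
  have hD : ∀ n, IsCompact (⋃ k ∈ Finset.range (n + 1), C k) := by
    intro n
    exact (Finset.range (n + 1)).isCompact_biUnion (fun k _ => hC k)
  have hsub : ∀ n, (⋃ k ∈ Finset.range (n + 1), C k) ⊆ ⋃ V : 𝒰 n, (V : Set (ℕ → Bool)) := by
    intro n
    refine Set.Subset.trans ?_ ((Set.sUnion_eq_iUnion ▸ hcov n))
    exact Set.iUnion₂_subset fun k _ => Set.subset_iUnion C k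
  have hfin : ∀ n, ∃ t : Finset (𝒰 n),
      (⋃ k ∈ Finset.range (n + 1), C k) ⊆ ⋃ V ∈ t, (V : Set (ℕ → Bool)) := by
    intro n
    exact (hD n).elim_finite_subcover (fun V : 𝒰 n => (V : Set (ℕ → Bool)))
      (fun V => hop n V V.2) (hsub n)
  choose t ht using hfin
  refine ⟨fun n => (fun V : 𝒰 n => (V : Set (ℕ → Bool))) '' (t n : Set (𝒰 n)),
    fun n => ⟨(t n).finite_toSet.image _, ?_⟩, fun x hx => ?_⟩
  · rintro V ⟨W, -, rfl⟩
    exact W.2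
  · obtain ⟨k, hk⟩ := Set.mem_iUnion.1 hx
    rw [Filter.eventually_atTop]
    refine ⟨k, fun n hn => ?_⟩
    have hxD : x ∈ ⋃ j ∈ Finset.range (n + 1), C j :=
      Set.mem_biUnion (Finset.mem_range.2 (by omega)) hk
    obtain ⟨V, hVt, hxV⟩ := Set.mem_iUnion₂.1 (ht n hxD)
    exact ⟨(V : Set (ℕ → Bool)), ⟨V, hVt, rfl⟩, hxV⟩

/-- The Hurewicz covering property for a subset `S` of a topological space. -/
def HurewiczSet {Z : Type*} [TopologicalSpace Z] (S : Set Z) : Prop :=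
  ∀ 𝒰 : ℕ → Set (Set Z), (∀ n, (∀ V ∈ 𝒰 n, IsOpen V) ∧ S ⊆ ⋃₀ 𝒰 n) →
    ∃ ℱ : ℕ → Set (Set Z), (∀ n, (ℱ n).Finite ∧ ℱ n ⊆ 𝒰 n) ∧
      ∀ x ∈ S, ∀ᶠ n in Filter.atTop, x ∈ ⋃₀ ℱ n

/-- if every `G_δ` set `G ⊇ Fin` contains a σ-compact `F ⊆ G` with
`|X ∖ F| < 𝔟`, then `X ∪ Fin` is 𝔟-concentrated on `Fin` (every open set containing
`Fin` misses fewer than 𝔟 points of `X`) and for every `A ⊆ X` with `|A| < 𝔟` the set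
`(X ∖ A) ∪ Fin` is Hurewicz. -/
theorem stmt17 (X : Set (ℕ → Bool)) (hX : ∀ x ∈ X, {n | x n = true}.Infinite)
    (hyp : ∀ G : Set (ℕ → Bool), IsGδ G → FinS ⊆ G →
      ∃ F : Set (ℕ → Bool),
        (∃ C : ℕ → Set (ℕ → Bool), (∀ n, IsCompact (C n)) ∧ F = ⋃ n, C n) ∧
        F ⊆ G ∧ Cardinal.mk ↥(X \ F) < bNumber) :
    (∀ U : Set (ℕ → Bool), IsOpen U → FinS ⊆ U →
        Cardinal.mk ↥(X \ U) < bNumber) ∧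
    ∀ A ⊆ X, Cardinal.mk A < bNumber → HurewiczSet ((X \ A) ∪ FinS) := by
  constructor
  · intro U hU hFU
    obtain ⟨F, ⟨C, hC, rfl⟩, hFG, hsmall⟩ := hyp U hU.isGδ hFU
    exact lt_of_le_of_lt
      (Cardinal.mk_le_mk_of_subset (Set.diff_subset_diff_right hFG)) hsmall
  · intro A hA hAcard 𝒰 h𝒰
    have hGδ : IsGδ (⋂ n, ⋃₀ 𝒰 n) :=
      IsGδ.iInter_of_isOpen (fun n => isOpen_sUnion (h𝒰 n).1)
    have hFinG : FinS ⊆ ⋂ n, ⋃₀ 𝒰 n :=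
      fun x hx => Set.mem_iInter.2 fun n => (h𝒰 n).2 (Or.inr hx)
    obtain ⟨F, ⟨C, hC, rfl⟩, hFG, hsmall⟩ := hyp _ hGδ hFinG
    have hcov : ∀ n, (⋃ m, C m) ⊆ ⋃₀ 𝒰 n := fun n x hx => Set.mem_iInter.1 (hFG hx) n
    obtain ⟨ℱ1, hℱ1, hsel1⟩ := sigma_select C hC 𝒰 (fun n => (h𝒰 n).1) hcov
    set Y := ((X \ A) ∪ FinS) \ (⋃ m, C m) with hYdef
    have hYsub : Y ⊆ (X \ ⋃ m, C m) ∪ FinS := by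
      rintro x ⟨hxS | hxS, hxF⟩
      · exact Or.inl ⟨hxS.1, hxF⟩
      · exact Or.inr hxS
    have hFinCard : Cardinal.mk ↥FinS < bNumber :=
      lt_of_le_of_lt (Cardinal.le_aleph0_iff_set_countable.2 finS_countable)
        aleph0_lt_bNumber
    have hYcard : Cardinal.mk ↥Y < bNumber := by
      refine lt_of_le_of_lt (Cardinal.mk_le_mk_of_subset hYsub) ?_
      refine lt_of_le_of_lt (Cardinal.mk_union_le _ _) ?_
      exact Cardinal.add_lt_of_lt aleph0_lt_bNumber.le hsmall hFinCard
    obtain ⟨ℱ2, hℱ2, hsel2⟩ := small_select Y hYcard 𝒰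
      (fun n => ⟨(h𝒰 n).1, fun x hx => (h𝒰 n).2 hx.1⟩)
    refine ⟨fun n => ℱ1 n ∪ ℱ2 n, fun n =>
      ⟨(hℱ1 n).1.union (hℱ2 n).1, Set.union_subset (hℱ1 n).2 (hℱ2 n).2⟩, ?_⟩
    intro x hx
    by_cases hxF : x ∈ ⋃ m, C m
    · exact (hsel1 x hxF).mono fun n hn =>
        Set.sUnion_subset_sUnion Set.subset_union_left hn
    · exact (hsel2 x ⟨hx, hxF⟩).mono fun n hn =>
        Set.sUnion_subset_sUnion Set.subset_union_right hn
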